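/- Let p₁,...,pₙ > 0, m < M, c ∈ ℝ, P = {z ∈ ℝⁿ : Σ pᵢzᵢ = c, m ≤ zᵢ ≤ M, z₁ ≥ ... ≥ zₙ} nonempty. Suppose v ∈ P is an extreme point. Then among the coordinates of v strictly between m and M, all are equal; i.e., there exists α such that for every index i with m < vᵢ < M, vᵢ = α. -/

import Mathlib

set_option maxHeartbeats 2000000 in
theorem stmt2 {n : ℕ} (p : Fin n → ℝ) (hp : ∀ i, 0 < p i) (m M c : ℝ) (hmM : m < M)
    (P : Set (Fin n → ℝ))
    (hP : P = {z : Fin n → ℝ | (∑ i, p i * z i = c) ∧ (∀ i, m ≤ z i ∧ z i ≤ M) ∧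
      (∀ i j : Fin n, i ≤ j → z j ≤ z i)})
    (hne : P.Nonempty)
    (v : Fin n → ℝ) (hv : v ∈ Set.extremePoints ℝ P) :
    ∃ α : ℝ, ∀ i : Fin n, m < v i → v i < M → v i = α := by
  subst hP
  by_cases hint : ∃ i, m < v i ∧ v i < M
  · obtain ⟨i₀, hi₀m, hi₀M⟩ := hint
    refine ⟨v i₀, fun j hjm hjM => ?_⟩
    by_contra hne'
    obtain ⟨hvP, hext⟩ := hv
    obtain ⟨hsumv, hbnd, hmono⟩ := hvP
    have hab : ¬ (v j = v i₀) := hne'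
    set t := ∑ k ∈ Finset.univ.filter (fun k => v k = v i₀), p k with hta
    set s := ∑ k ∈ Finset.univ.filter (fun k => v k = v j), p k with hsa
    have ht : 0 < t := Finset.sum_pos (fun k _ => hp k)
      ⟨i₀, Finset.mem_filter.2 ⟨Finset.mem_univ _, rfl⟩⟩
    have hs : 0 < s := Finset.sum_pos (fun k _ => hp k)
      ⟨j, Finset.mem_filter.2 ⟨Finset.mem_univ _, rfl⟩⟩
    set d : Fin n → ℝ := fun k => if v k = v i₀ then s else if v k = v j then -t else 0 with hdd
    have hd_eq : ∀ k l, v k = v l → d k = d l := by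
      intro k l h
      simp only [hdd, h]
    have hd_bnd : ∀ k, d k ≤ s ∧ -t ≤ d k := by
      intro k
      simp only [hdd]
      split_ifs <;> constructor <;> linarith
    have hdsum : ∑ k, p k * d k = 0 := by
      have hcongr : ∀ k ∈ Finset.univ, p k * d k =
          (if v k = v i₀ then p k * s else 0) + (if v k = v j then p k * (-t) else 0) := by
        intro k _
        by_cases h1 : v k = v i₀
        · have h2 : ¬ v k = v j := fun h => hab (h.symm.trans h1)
          simp only [hdd]
          rw [if_pos h1, if_pos h1, if_neg h2]
          ring
        · by_cases h2 : v k = v j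
          · simp only [hdd]
            rw [if_neg h1, if_pos h2, if_neg h1, if_pos h2]
            ring
          · simp only [hdd]
            rw [if_neg h1, if_neg h2, if_neg h1, if_neg h2]
            ring
      rw [Finset.sum_congr rfl hcongr, Finset.sum_add_distrib,
        ← Finset.sum_filter, ← Finset.sum_filter, ← Finset.sum_mul, ← Finset.sum_mul,
        ← hta, ← hsa]
      ring
    -- minimal gap
    set S := Finset.image (fun q : Fin n × Fin n => v q.1 - v q.2)
      (Finset.filter (fun q : Fin n × Fin n => v q.2 < v q.1) Finset.univ) with hS
    have hSne : S.Nonempty := by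
      rcases lt_or_gt_of_ne hab with h | h
      · exact ⟨v i₀ - v j, Finset.mem_image.2 ⟨(i₀, j),
          Finset.mem_filter.2 ⟨Finset.mem_univ _, h⟩, rfl⟩⟩
      · exact ⟨v j - v i₀, Finset.mem_image.2 ⟨(j, i₀),
          Finset.mem_filter.2 ⟨Finset.mem_univ _, h⟩, rfl⟩⟩
    set g := S.min' hSne with hgdef
    have hg_le : ∀ k l : Fin n, v l < v k → g ≤ v k - v l := by
      intro k l h
      exact S.min'_le _ (Finset.mem_image.2 ⟨(k, l),
        Finset.mem_filter.2 ⟨Finset.mem_univ _, h⟩, rfl⟩)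
    have hg_pos : 0 < g := by
      obtain ⟨q, hq, hqe⟩ := Finset.mem_image.1 (S.min'_mem hSne)
      rw [hgdef] at *
      rw [← hqe]
      have := (Finset.mem_filter.1 hq).2
      linarith
    set δ := min (min (v i₀ - m) (M - v i₀)) (min (min (v j - m) (M - v j)) g) with hδdef
    have hδ1 : δ ≤ v i₀ - m := le_trans (min_le_left _ _) (min_le_left _ _)
    have hδ2 : δ ≤ M - v i₀ := le_trans (min_le_left _ _) (min_le_right _ _)
    have hδ3 : δ ≤ v j - m :=
      le_trans (min_le_right _ _) (le_trans (min_le_left _ _) (min_le_left _ _))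
    have hδ4 : δ ≤ M - v j :=
      le_trans (min_le_right _ _) (le_trans (min_le_left _ _) (min_le_right _ _))
    have hδ5 : δ ≤ g := le_trans (min_le_right _ _) (min_le_right _ _)
    have hδ : 0 < δ := by
      simp only [hδdef, lt_min_iff]
      exact ⟨⟨by linarith, by linarith⟩, ⟨⟨by linarith, by linarith⟩, hg_pos⟩⟩
    set ε := δ / (s + t + 1) with hεdef
    have hst : (0:ℝ) < s + t + 1 := by linarith
    have hε : 0 < ε := div_pos hδ hst
    have hεbound : ε * (s + t) < δ := by
      have h1 : ε * (s + t + 1) = δ := div_mul_cancel₀ δ (ne_of_gt hst)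
      nlinarith
    clear_value g δ ε
    have key : ∀ η : ℝ, -ε ≤ η → η ≤ ε →
        (fun k => v k + η * d k) ∈ {z : Fin n → ℝ | (∑ i, p i * z i = c) ∧
          (∀ i, m ≤ z i ∧ z i ≤ M) ∧ (∀ i j : Fin n, i ≤ j → z j ≤ z i)} := by
      intro η hη1 hη2
      refine ⟨?_, ?_, ?_⟩
      · have hcongr : ∀ k ∈ Finset.univ, p k * (v k + η * d k) =
            p k * v k + η * (p k * d k) := fun k _ => by ring
        rw [Finset.sum_congr rfl hcongr, Finset.sum_add_distrib, ← Finset.mul_sum,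
          hdsum, mul_zero, add_zero]
        exact hsumv
      · intro k
        dsimp only
        by_cases hk0 : d k = 0
        · rw [hk0]
          simpa using hbnd k
        · have hkv : v k = v i₀ ∨ v k = v j := by
            by_contra hc
            push_neg at hc
            apply hk0
            simp [hdd, hc.1, hc.2]
          obtain ⟨hgap1, hgap2⟩ : δ ≤ v k - m ∧ δ ≤ M - v k := by
            rcases hkv with h | h <;> rw [h] <;> constructor <;> linarith
          obtain ⟨hdk1, hdk2⟩ := hd_bnd k
          constructor
          · nlinarith [mul_nonneg (by linarith : (0:ℝ) ≤ ε - η)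
              (by linarith : (0:ℝ) ≤ (s+t) - d k),
              mul_nonneg (by linarith : (0:ℝ) ≤ ε + η)
              (by linarith : (0:ℝ) ≤ (s+t) + d k)]
          · nlinarith [mul_nonneg (by linarith : (0:ℝ) ≤ ε - η)
              (by linarith : (0:ℝ) ≤ (s+t) + d k),
              mul_nonneg (by linarith : (0:ℝ) ≤ ε + η)
              (by linarith : (0:ℝ) ≤ (s+t) - d k)]
      · intro k l hkl
        dsimp only
        by_cases heq : v k = v l
        · rw [heq, hd_eq k l heq]
        · have hlt : v l < v k := lt_of_le_of_ne (hmono k l hkl) fun h => heq h.symm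
          have hg' : g ≤ v k - v l := hg_le k l hlt
          obtain ⟨hdk1, hdk2⟩ := hd_bnd k
          obtain ⟨hdl1, hdl2⟩ := hd_bnd l
          nlinarith [mul_nonneg (by linarith : (0:ℝ) ≤ ε - η)
              (by linarith : (0:ℝ) ≤ (s+t) - (d l - d k)),
            mul_nonneg (by linarith : (0:ℝ) ≤ ε + η)
              (by linarith : (0:ℝ) ≤ (s+t) + (d l - d k))]
    have hz1 := key ε (by linarith) le_rfl
    have hz2 := key (-ε) le_rfl (by linarith)
    have hmem : v ∈ openSegment ℝ (fun k => v k + ε * d k) (fun k => v k + (-ε) * d k) := by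
      refine ⟨1/2, 1/2, by norm_num, by norm_num, by norm_num, ?_⟩
      funext k
      simp only [Pi.add_apply, Pi.smul_apply, smul_eq_mul]
      ring
    have he1 := hext hz1 hz2 hmem
    have hj := congrFun he1 j
    have hdj : d j = -t := by
      simp only [hdd]
      rw [if_neg hab]
      simp
    rw [hdj] at hj
    clear_value d s t
    have h0 : 0 < ε * t := mul_pos hε ht
    nlinarith
  · exact ⟨0, fun i h1 h2 => absurd ⟨i, h1, h2⟩ hint⟩
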